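/- Let x₁, x₂, x₃ ∈ ℝ with x₁ + x₂ and x₃ both nonzero and of the same sign, and let δ ∈ ℝ with |δ| ≤ ε for some ε > 0, such that (x₁+x₂)e^δ and x₃ are at finite RP-distance. Define b(x₁,x₂,x₃) = (x₃x₁/(x₁+x₂), x₃x₂/(x₁+x₂)). Then the sum of the components of b(x₁,x₂,x₃) equals x₃ exactly, and max{RP(x₁, x₃x₁/(x₁+x₂)), RP(x₂, x₃x₂/(x₁+x₂))} ≤ RP((x₁+x₂)e^δ, x₃) + ε. -/

import Mathlib

open scoped ENNReal

/-- Olver's relative precision metric: `|ln(x/y)|` when `x` and `y` are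
nonzero with the same sign, `0` when `x = y = 0`, and `∞` otherwise. -/
noncomputable def RP (x y : ℝ) : ℝ≥0∞ :=
  if 0 < x * y then ENNReal.ofReal |Real.log (x / y)|
  else if x = 0 ∧ y = 0 then 0
  else ⊤

lemma RP_mul_self (x c : ℝ) (hc : 0 < c) :
    RP x (x * c) ≤ ENNReal.ofReal |Real.log c| := by
  rcases eq_or_ne x 0 with h | h
  · simp [RP, h]
  · have hx2 : 0 < x * (x * c) := by
      rw [← mul_assoc]
      exact mul_pos (mul_self_pos.mpr h) hc
    have hdiv : x / (x * c) = c⁻¹ := by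
      field_simp
    rw [RP, if_pos hx2, hdiv, Real.log_inv, abs_neg]

theorem add_lens_backward (x₁ x₂ x₃ δ ε : ℝ)
    (hsign : 0 < (x₁ + x₂) * x₃) (hδ : |δ| ≤ ε) (hε : 0 < ε)
    (hfin : RP ((x₁ + x₂) * Real.exp δ) x₃ < ⊤) :
    x₃ * x₁ / (x₁ + x₂) + x₃ * x₂ / (x₁ + x₂) = x₃ ∧
    max (RP x₁ (x₃ * x₁ / (x₁ + x₂))) (RP x₂ (x₃ * x₂ / (x₁ + x₂))) ≤
      RP ((x₁ + x₂) * Real.exp δ) x₃ + ENNReal.ofReal ε := by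
  have hs : x₁ + x₂ ≠ 0 := left_ne_zero_of_mul (ne_of_gt hsign)
  have hx₃ : x₃ ≠ 0 := right_ne_zero_of_mul (ne_of_gt hsign)
  have hc : 0 < x₃ / (x₁ + x₂) := by
    rcases mul_pos_iff.mp hsign with ⟨h1, h2⟩ | ⟨h1, h2⟩
    · exact div_pos h2 h1
    · exact div_pos_of_neg_of_neg h2 h1
  constructor
  · field_simp
  · -- rewrite perturbed inputs as xᵢ * c
    have h1 : x₃ * x₁ / (x₁ + x₂) = x₁ * (x₃ / (x₁ + x₂)) := by ring
    have h2 : x₃ * x₂ / (x₁ + x₂) = x₂ * (x₃ / (x₁ + x₂)) := by ring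
    rw [h1, h2]
    set c := x₃ / (x₁ + x₂) with hcdef
    -- compute RHS RP
    have hpos : 0 < (x₁ + x₂) * Real.exp δ * x₃ := by
      have := Real.exp_pos δ
      nlinarith
    have hRP : RP ((x₁ + x₂) * Real.exp δ) x₃
        = ENNReal.ofReal |Real.log ((x₁ + x₂) / x₃) + δ| := by
      rw [RP, if_pos hpos]
      congr 1
      rw [show (x₁ + x₂) * Real.exp δ / x₃ = (x₁ + x₂) / x₃ * Real.exp δ by ring,
        Real.log_mul (div_ne_zero hs hx₃) (Real.exp_ne_zero δ), Real.log_exp]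
    have hlog : Real.log ((x₁ + x₂) / x₃) = -Real.log c := by
      rw [hcdef, ← Real.log_inv, inv_div]
    have key : |Real.log c| ≤ |Real.log ((x₁ + x₂) / x₃) + δ| + ε := by
      rw [hlog]
      have h := abs_add_le (-Real.log c + δ) (-δ)
      simp only [add_neg_cancel_right, abs_neg] at h
      linarith
    have hbound : ENNReal.ofReal |Real.log c| ≤
        RP ((x₁ + x₂) * Real.exp δ) x₃ + ENNReal.ofReal ε := by
      rw [hRP, ← ENNReal.ofReal_add (abs_nonneg _) hε.le]
      exact ENNReal.ofReal_le_ofReal key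
    exact max_le ((RP_mul_self x₁ c hc).trans hbound)
      ((RP_mul_self x₂ c hc).trans hbound)
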